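/- Let X be a compact Hausdorff topological space in which every open subset is an Fσ-set (i.e., X is perfectly normal compact). Then X is metrizable if and only if X is weakly homeomorphic to a metrizable topological space. -/
import Mathlib

open Set Function Topology

/-- A map `f : X → Y` is weakly discontinuous if every nonempty subset `A ⊆ X`
contains a nonempty subset `U`, open in the subspace topology of `A`, on which
`f` restricts to a continuous map. -/
def WeaklyDiscontinuous {X Y : Type*} [TopologicalSpace X] [TopologicalSpace Y]
    (f : X → Y) : Prop :=
  ∀ A : Set X, A.Nonempty → ∃ U : Set X, U ⊆ A ∧ U.Nonempty ∧
    (∃ V : Set X, IsOpen V ∧ U = A ∩ V) ∧ ContinuousOn f U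

/-- Topological spaces `X` and `Y` are weakly homeomorphic if there is a bijection
`f : X → Y` such that both `f` and its inverse are weakly discontinuous. -/
def WeaklyHomeomorphic (X : Type*) (Y : Type*) [TopologicalSpace X] [TopologicalSpace Y] :
    Prop :=
  ∃ (f : X → Y) (g : Y → X), Function.LeftInverse g f ∧ Function.RightInverse g f ∧
    WeaklyDiscontinuous f ∧ WeaklyDiscontinuous g

lemma Continuous.weaklyDiscontinuous' {X Y : Type*} [TopologicalSpace X] [TopologicalSpace Y]
    {f : X → Y} (hf : Continuous f) : WeaklyDiscontinuous f :=
  fun A hA => ⟨A, subset_rfl, hA, ⟨univ, isOpen_univ, (inter_univ A).symm⟩, hf.continuousOn⟩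

/-- On a hereditarily Lindelöf space, a weakly discontinuous map admits a countable cover by
sets of continuity. -/
lemma WeaklyDiscontinuous.sigma_continuous {X : Type*} {Y : Type*} [TopologicalSpace X]
    [TopologicalSpace Y] {f : X → Y} (hf : WeaklyDiscontinuous f)
    (hX : ∀ s : Set X, IsLindelof s) :
    ∃ S : Set (Set X), S.Countable ∧ ⋃₀ S = univ ∧ ∀ s ∈ S, ContinuousOn f s := by
  set P : Set (Set X) := {U | IsOpen U ∧ ∃ S : Set (Set X), S.Countable ∧ U = ⋃₀ S ∧
    ∀ s ∈ S, ContinuousOn f s} with hP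
  set W : Set X := ⋃₀ P with hW
  have hWopen : IsOpen W := isOpen_sUnion fun U hU => hU.1
  have hWP : W ∈ P := by
    obtain ⟨t, htc, htsub⟩ := (hX W).elim_countable_subcover (fun U : P => (U : Set X))
      (fun U => U.2.1)
      (by rintro x ⟨U, hU, hxU⟩; exact mem_iUnion.2 ⟨⟨U, hU⟩, hxU⟩)
    choose Si hSic hSieq hSicont using fun U : P => U.2.2
    refine ⟨hWopen, ⋃ U ∈ t, Si U, ?_, ?_, ?_⟩
    · exact htc.biUnion fun U _ => hSic U
    · apply subset_antisymm
      · intro x hx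
        obtain ⟨U, hU, hxU⟩ := mem_iUnion₂.1 (htsub hx)
        rw [hSieq U] at hxU
        obtain ⟨s, hs, hxs⟩ := hxU
        exact ⟨s, mem_iUnion₂.2 ⟨U, hU, hs⟩, hxs⟩
      · rintro x ⟨s, hs, hxs⟩
        obtain ⟨U, hU, hsU⟩ := mem_iUnion₂.1 hs
        exact ⟨U, U.2, by rw [hSieq U]; exact ⟨s, hsU, hxs⟩⟩
    · intro s hs
      obtain ⟨U, hU, hsU⟩ := mem_iUnion₂.1 hs
      exact hSicont U s hsU
  have hWuniv : W = univ := by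
    by_contra h
    have hA : Wᶜ.Nonempty := nonempty_compl.2 h
    obtain ⟨U, hUA, hUne, ⟨V, hVopen, hUV⟩, hUcont⟩ := hf Wᶜ hA
    obtain ⟨SW, hSWc, hSWeq, hSWcont⟩ := hWP.2
    have hWVP : W ∪ V ∈ P := by
      refine ⟨hWopen.union hVopen, SW ∪ {U}, hSWc.union (countable_singleton U), ?_, ?_⟩
      · rw [sUnion_union, ← hSWeq, sUnion_singleton]
        apply subset_antisymm
        · intro x hx
          rcases hx with hx | hx
          · exact Or.inl hx
          · by_cases hxW : x ∈ W
            · exact Or.inl hxW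
            · exact Or.inr (by rw [hUV]; exact ⟨hxW, hx⟩)
        · rintro x (hx | hx)
          · exact Or.inl hx
          · rw [hUV] at hx; exact Or.inr hx.2
      · rintro s (hs | hs)
        · exact hSWcont s hs
        · rw [mem_singleton_iff.1 hs]; exact hUcont
    have : W ∪ V ⊆ W := subset_sUnion_of_mem hWVP
    obtain ⟨x, hxU⟩ := hUne
    exact (hUA hxU) (this (Or.inr (by rw [hUV] at hxU; exact hxU.2)))
  obtain ⟨_, S, hSc, hSeq, hScont⟩ := hWP
  exact ⟨S, hSc, by rw [← hSeq, hWuniv], hScont⟩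

/-- A compact Hausdorff space with a countable network is second countable. -/
lemma secondCountable_of_countable_network {X : Type*} [TopologicalSpace X] [CompactSpace X]
    [T2Space X] (N : Set (Set X)) (hNc : N.Countable)
    (hnet : ∀ (x : X) (O : Set X), IsOpen O → x ∈ O → ∃ n ∈ N, x ∈ n ∧ n ⊆ O) :
    SecondCountableTopology X := by
  set P : Set (Set X × Set X) := {p | p.1 ∈ N ∧ p.2 ∈ N ∧ Disjoint (closure p.1) (closure p.2)}
    with hPdef
  have hPc : P.Countable := (hNc.prod hNc).mono fun p hp => Set.mem_prod.2 ⟨hp.1, hp.2.1⟩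
  have hsep : ∀ p ∈ P, ∃ UV : Set X × Set X, IsOpen UV.1 ∧ IsOpen UV.2 ∧
      closure p.1 ⊆ UV.1 ∧ closure p.2 ⊆ UV.2 ∧ Disjoint UV.1 UV.2 := by
    intro p hp
    obtain ⟨u, v, hu, hv, h1, h2, hd⟩ := normal_separation isClosed_closure isClosed_closure hp.2.2
    exact ⟨(u, v), hu, hv, h1, h2, hd⟩
  choose! UV hUo hVo hMU hNV hUVd using hsep
  set B : Set (Set X) := (fun t : Set (Set X × Set X) => ⋂ p ∈ t, (UV p).1) ''
    {t | t.Finite ∧ t ⊆ P} with hBdef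
  have hBc : B.Countable := (Set.countable_setOf_finite_subset hPc).image _
  have hBopen : ∀ b ∈ B, IsOpen b := by
    rintro b ⟨t, ⟨htf, htP⟩, rfl⟩
    exact htf.isOpen_biInter fun p hp => hUo p (htP hp)
  have hBnhds : ∀ (x : X) (O : Set X), x ∈ O → IsOpen O → ∃ b ∈ B, x ∈ b ∧ b ⊆ O := by
    intro x O hxO hO
    have key : ∀ y ∈ Oᶜ, ∃ p ∈ {p | p ∈ P ∧ x ∈ p.1}, y ∈ (UV p).2 := by
      intro y hy
      have hxy : x ≠ y := fun h => hy (h ▸ hxO)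
      obtain ⟨G', H', hG', hH', hxG', hyH', hGH'⟩ := t2_separation hxy
      obtain ⟨tG, htGn, htGc, htGsub⟩ := exists_mem_nhds_isClosed_subset (hG'.mem_nhds hxG')
      obtain ⟨tH, htHn, htHc, htHsub⟩ := exists_mem_nhds_isClosed_subset (hH'.mem_nhds hyH')
      obtain ⟨m, hmN, hxm, hmsub⟩ := hnet x (interior tG) isOpen_interior
        (mem_interior_iff_mem_nhds.2 htGn)
      obtain ⟨n, hnN, hyn, hnsub⟩ := hnet y (interior tH) isOpen_interior
        (mem_interior_iff_mem_nhds.2 htHn)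
      have hmcl : closure m ⊆ G' := ((closure_mono hmsub).trans
        ((closure_minimal interior_subset htGc).trans htGsub))
      have hncl : closure n ⊆ H' := ((closure_mono hnsub).trans
        ((closure_minimal interior_subset htHc).trans htHsub))
      have hpP : (m, n) ∈ P := ⟨hmN, hnN, hGH'.mono hmcl hncl⟩
      exact ⟨(m, n), ⟨hpP, hxm⟩, hNV _ hpP (subset_closure hyn)⟩
    have hKc : IsCompact Oᶜ := (hO.isClosed_compl).isCompact
    obtain ⟨t, htsub, htf, htcov⟩ := hKc.elim_finite_subcover_image
      (fun p (hp : p ∈ {p | p ∈ P ∧ x ∈ p.1}) => hVo p hp.1)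
      (by intro y hy; obtain ⟨p, hp, hyp⟩ := key y hy; exact mem_iUnion₂.2 ⟨p, hp, hyp⟩)
    refine ⟨⋂ p ∈ t, (UV p).1, ⟨t, ⟨htf, fun p hp => (htsub hp).1⟩, rfl⟩, ?_, ?_⟩
    · exact mem_iInter₂.2 fun p hp => hMU p (htsub hp).1 (subset_closure (htsub hp).2)
    · intro z hz
      by_contra hzO
      obtain ⟨p, hp, hzp⟩ := mem_iUnion₂.1 (htcov hzO)
      exact (hUVd p (htsub hp).1).ne_of_mem (mem_iInter₂.1 hz p hp) hzp rfl
  exact (TopologicalSpace.isTopologicalBasis_of_isOpen_of_nhds hBopen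
    (fun x O hx hO => hBnhds x O hx hO)).secondCountableTopology hBc

universe u

theorem perfectlyNormal_compact_metrizable_iff
    {X : Type u} [TopologicalSpace X] [CompactSpace X] [T2Space X]
    (hFsigma : ∀ U : Set X, IsOpen U →
      ∃ C : ℕ → Set X, (∀ n, IsClosed (C n)) ∧ U = ⋃ n, C n) :
    TopologicalSpace.MetrizableSpace X ↔
      ∃ (Y : Type u) (tY : TopologicalSpace Y),
        TopologicalSpace.MetrizableSpace Y ∧ WeaklyHomeomorphic X Y := by
  constructor
  · intro hX
    exact ⟨X, inferInstance, hX, id, id, fun _ => rfl, fun _ => rfl,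
      continuous_id.weaklyDiscontinuous', continuous_id.weaklyDiscontinuous'⟩
  · rintro ⟨Y, tY, hYmet, f, g, hgf, hfg, hf, hg⟩
    -- X is hereditarily Lindelöf
    have hXlin : ∀ s : Set X, IsLindelof s := by
      intro s
      have hopen : ∀ O : Set X, IsOpen O → IsLindelof O := by
        intro O hO
        obtain ⟨C, hC, rfl⟩ := hFsigma O hO
        exact isLindelof_iUnion fun n => ((hC n).isCompact).isLindelof
      apply isLindelof_of_countable_subcover
      intro ι U hU hsU
      obtain ⟨t, htc, hts⟩ := (hopen (⋃ i, U i) (isOpen_iUnion hU)).elim_countable_subcover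
        U hU subset_rfl
      exact ⟨t, htc, hsU.trans hts⟩
    obtain ⟨S, hSc, hSuniv, hScont⟩ := hf.sigma_continuous hXlin
    -- Y is hereditarily Lindelöf
    have hYlin : ∀ T : Set Y, IsLindelof T := by
      intro T
      have hTeq : T = ⋃ s ∈ S, f '' ((g '' T) ∩ s) := by
        apply subset_antisymm
        · intro y hy
          have hgy : g y ∈ ⋃₀ S := by rw [hSuniv]; exact mem_univ _
          obtain ⟨s, hs, hgs⟩ := hgy
          exact mem_iUnion₂.2 ⟨s, hs, ⟨g y, ⟨mem_image_of_mem g hy, hgs⟩, hfg y⟩⟩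
        · intro y hy
          obtain ⟨s, _, x, ⟨⟨y', hy', rfl⟩, _⟩, rfl⟩ := mem_iUnion₂.1 hy
          rw [hfg y']; exact hy'
      rw [hTeq]
      exact hSc.isLindelof_biUnion fun s hs =>
        (hXlin _).image_of_continuousOn ((hScont s hs).mono inter_subset_right)
    haveI : LindelofSpace Y := ⟨hYlin univ⟩
    haveI := hYmet
    haveI : SecondCountableTopology Y := inferInstance
    -- decomposition for g
    obtain ⟨T, hTc, hTuniv, hTcont⟩ := hg.sigma_continuous hYlin
    -- countable network for X
    set N : Set (Set X) := (fun q : Set Y × Set Y => g '' (q.1 ∩ q.2)) ''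
      ((TopologicalSpace.countableBasis Y) ×ˢ T) with hNdef
    have hNc : N.Countable :=
      ((TopologicalSpace.countable_countableBasis Y).prod hTc).image _
    have hnet : ∀ (x : X) (O : Set X), IsOpen O → x ∈ O → ∃ n ∈ N, x ∈ n ∧ n ⊆ O := by
      intro x O hO hxO
      have hfx : f x ∈ ⋃₀ T := by rw [hTuniv]; exact mem_univ _
      obtain ⟨s, hs, hfs⟩ := hfx
      have hc : ContinuousWithinAt g s (f x) := (hTcont s hs) (f x) hfs
      have hO' : O ∈ 𝓝 (g (f x)) := by rw [hgf x]; exact hO.mem_nhds hxO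
      obtain ⟨W, hWopen, hfxW, hWs⟩ := mem_nhdsWithin.1 (hc.preimage_mem_nhdsWithin hO')
      obtain ⟨B, hB, hfxB, hBW⟩ :=
        (TopologicalSpace.isBasis_countableBasis Y).exists_subset_of_mem_open hfxW hWopen
      refine ⟨g '' (B ∩ s), ⟨(B, s), Set.mem_prod.2 ⟨hB, hs⟩, rfl⟩,
        ⟨f x, ⟨hfxB, hfs⟩, hgf x⟩, ?_⟩
      rintro _ ⟨y, ⟨hyB, hys⟩, rfl⟩
      exact hWs ⟨hBW hyB, hys⟩
    haveI := secondCountable_of_countable_network N hNc hnet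
    exact inferInstance
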